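/- Let a, b be integers with b - a \ge 2, let 1 < \alpha < 2, and let h : \{a+1, \ldots, b\} \to \mathbb{R}. Then the function u(t) = \sum_{s=a+1}^{b} G(t,s) h(s), t \in \{a, \ldots, b\}, is the unique function satisfying the nabla fractional boundary value problem (\nabla^{\alpha}_{\rho(a)} u)(t) + h(t) = 0 for t \in \{a+2, \ldots, b\}, u(a) = 0, u(b) = 0. -/

import Mathlib

open Finset Real


/-- Generalized rising function `x^{overline r} = Γ(x+r)/Γ(x)`; since `Real.Gamma`
vanishes at nonpositive integers and division by zero is zero in Lean, the convention
`x^{overline r} = 0` for nonpositive integer `x` holds automatically. -/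
noncomputable def rising (x r : ℝ) : ℝ := Real.Gamma (x + r) / Real.Gamma x

/-- Green's function of the conjugate nabla fractional boundary value problem. -/
noncomputable def G (a b : ℤ) (α : ℝ) (t s : ℤ) : ℝ :=
  if t ≤ s - 1 then
    (rising ((b : ℝ) - s + 1) (α - 1) / rising ((b : ℝ) - a) (α - 1))
      * rising ((t : ℝ) - a) (α - 1) / Real.Gamma α
  else
    ((rising ((b : ℝ) - s + 1) (α - 1) / rising ((b : ℝ) - a) (α - 1))
      * rising ((t : ℝ) - a) (α - 1) - rising ((t : ℝ) - s + 1) (α - 1)) / Real.Gamma α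

/-- The `ν`-th order nabla sum based at `a - 1`:
`(∇^{-ν}_{a-1} u)(t) = ∑_{s=a}^{t} H_{ν-1}(t, s-1) u(s)`, where
`H_{ν-1}(t, s-1) = (t-s+1)^{overline{ν-1}}/Γ(ν)`. -/
noncomputable def nablaSum (ν : ℝ) (a : ℤ) (u : ℤ → ℝ) (t : ℤ) : ℝ :=
  ∑ s ∈ Finset.Icc a t, (rising ((t : ℝ) - s + 1) (ν - 1) / Real.Gamma ν) * u s

/-- The Riemann–Liouville nabla fractional difference of order `α` (with `1 < α < 2`)
based at `ρ(a) = a - 1`: `(∇^α_{a-1} u)(t) = ∇² (∇^{-(2-α)}_{a-1} u)(t)`. -/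
noncomputable def nablaDiff (α : ℝ) (a : ℤ) (u : ℤ → ℝ) (t : ℤ) : ℝ :=
  nablaSum (2 - α) a u t - 2 * nablaSum (2 - α) a u (t - 1) + nablaSum (2 - α) a u (t - 2)

lemma rising_int_nonpos {m : ℤ} (hm : m ≤ 0) (r : ℝ) : rising (m:ℝ) r = 0 := by
  have : Real.Gamma (m:ℝ) = 0 := by
    have h1 : (m:ℝ) = -((-m).toNat : ℕ) := by
      have : ((-m).toNat : ℤ) = -m := Int.toNat_of_nonneg (by omega)
      exact_mod_cast (by omega : m = -((-m).toNat : ℤ))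
    rw [h1]; exact Real.Gamma_neg_nat_eq_zero _
  simp [rising, this]

noncomputable def gg (α : ℝ) (j : ℕ) : ℝ := Real.Gamma (j+α)/Real.Gamma (j+1)
noncomputable def ff (α : ℝ) (i : ℕ) : ℝ := Real.Gamma (i+(2-α))/Real.Gamma (i+1)

lemma gg_rec (α : ℝ) (h0 : 0 < α) (j : ℕ) :
    ((j:ℝ)+1) * gg α (j+1) = ((j:ℝ)+α) * gg α j := by
  have e1 : Real.Gamma ((j:ℕ)+1+α) = ((j:ℝ)+α) * Real.Gamma (j+α) := by
    have := Real.Gamma_add_one (s := (j:ℝ)+α) (by positivity)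
    rw [← this]; ring_nf
  have e2 : Real.Gamma ((j:ℕ)+1+1) = ((j:ℝ)+1) * Real.Gamma (j+1) := by
    have := Real.Gamma_add_one (s := (j:ℝ)+1) (by positivity)
    rw [← this]
  have hΓ : Real.Gamma ((j:ℝ)+1) ≠ 0 := ne_of_gt (Real.Gamma_pos_of_pos (by positivity))
  simp only [gg]
  push_cast
  rw [e1, e2]
  field_simp

lemma ff_rec (α : ℝ) (h2 : α < 2) (i : ℕ) :
    ((i:ℝ)+1) * ff α (i+1) = ((i:ℝ)+(2-α)) * ff α i := by
  have e1 : Real.Gamma ((i:ℕ)+1+(2-α)) = ((i:ℝ)+(2-α)) * Real.Gamma (i+(2-α)) := by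
    have := Real.Gamma_add_one (s := (i:ℝ)+(2-α))
      (by have : (0:ℝ) ≤ (i:ℝ) := Nat.cast_nonneg i; nlinarith)
    rw [← this]; ring_nf
  have e2 : Real.Gamma ((i:ℕ)+1+1) = ((i:ℝ)+1) * Real.Gamma (i+1) := by
    have := Real.Gamma_add_one (s := (i:ℝ)+1) (by positivity)
    rw [← this]
  have hΓ : Real.Gamma ((i:ℝ)+1) ≠ 0 := ne_of_gt (Real.Gamma_pos_of_pos (by positivity))
  simp only [ff]
  push_cast
  rw [e1, e2]
  field_simp

lemma convC (α : ℝ) (h0 : 0 < α) (h2 : α < 2) (n : ℕ) :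
    ∑ j ∈ Finset.range (n+1), gg α j * ff α (n-j)
      = ((n:ℝ)+1) * (Real.Gamma α * Real.Gamma (2-α)) := by
  induction n with
  | zero => simp [gg, ff, Real.Gamma_one]
  | succ n ih =>
    have split : ∑ j ∈ range (n+2), ((n:ℝ)+1) * (gg α j * ff α (n+1-j))
        = (∑ j ∈ range (n+2), (j:ℝ) * gg α j * ff α (n+1-j))
          + ∑ j ∈ range (n+2), ((n+1-j : ℕ):ℝ) * (gg α j * ff α (n+1-j)) := by
      rw [← sum_add_distrib]
      apply sum_congr rfl
      intro j hj
      have hj' : j ≤ n+1 := by simpa [Nat.lt_succ_iff] using hj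
      have hc : ((n+1-j : ℕ):ℝ) = (n:ℝ) + 1 - (j:ℝ) := by
        rw [Nat.cast_sub hj']; push_cast; ring
      rw [hc]; ring
    have S1 : ∑ j ∈ range (n+2), (j:ℝ) * gg α j * ff α (n+1-j)
        = ∑ k ∈ range (n+1), ((k:ℝ)+α) * (gg α k * ff α (n-k)) := by
      rw [Finset.sum_range_succ']
      simp only [Nat.cast_zero, zero_mul, add_zero]
      apply sum_congr rfl
      intro k hk
      have e : n+1-(k+1) = n - k := by omega
      rw [e]
      calc ((k+1:ℕ):ℝ) * gg α (k+1) * ff α (n-k)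
          = (((k:ℝ)+1) * gg α (k+1)) * ff α (n-k) := by push_cast; ring
        _ = (((k:ℝ)+α) * gg α k) * ff α (n-k) := by rw [gg_rec α h0 k]
        _ = ((k:ℝ)+α) * (gg α k * ff α (n-k)) := by ring
    have S2 : ∑ j ∈ range (n+2), ((n+1-j : ℕ):ℝ) * (gg α j * ff α (n+1-j))
        = ∑ j ∈ range (n+1), (((n-j:ℕ):ℝ)+(2-α)) * (gg α j * ff α (n-j)) := by
      rw [Finset.sum_range_succ]
      simp only [Nat.sub_self, Nat.cast_zero, zero_mul, add_zero]
      apply sum_congr rfl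
      intro j hj
      have hj' : j ≤ n := by simpa [Nat.lt_succ_iff] using hj
      have e1 : n+1-j = (n-j)+1 := by omega
      rw [e1]
      calc (((n-j)+1 : ℕ):ℝ) * (gg α j * ff α ((n-j)+1))
          = gg α j * ((((n-j:ℕ):ℝ)+1) * ff α ((n-j)+1)) := by push_cast; ring
        _ = gg α j * ((((n-j:ℕ):ℝ)+(2-α)) * ff α (n-j)) := by rw [ff_rec α h2 (n-j)]
        _ = (((n-j:ℕ):ℝ)+(2-α)) * (gg α j * ff α (n-j)) := by ring
    have comb : (∑ k ∈ range (n+1), ((k:ℝ)+α) * (gg α k * ff α (n-k)))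
          + ∑ j ∈ range (n+1), (((n-j:ℕ):ℝ)+(2-α)) * (gg α j * ff α (n-j))
        = ((n:ℝ)+2) * ∑ j ∈ range (n+1), gg α j * ff α (n-j) := by
      rw [← sum_add_distrib, mul_sum]
      apply sum_congr rfl
      intro j hj
      have hj' : j ≤ n := by simpa [Nat.lt_succ_iff] using hj
      have hc : ((n-j:ℕ):ℝ) = (n:ℝ) - (j:ℝ) := by rw [Nat.cast_sub hj']
      rw [hc]; ring
    have hsum : ((n:ℝ)+1) * ∑ j ∈ range (n+2), gg α j * ff α (n+1-j)
        = ((n:ℝ)+2) * ∑ j ∈ range (n+1), gg α j * ff α (n-j) := by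
      rw [mul_sum, split, S1, S2, comb]
    have hn1 : ((n:ℝ)+1) ≠ 0 := by positivity
    have key : ∑ j ∈ range (n+2), gg α j * ff α (n+1-j)
        = ((n:ℝ)+2) * (Real.Gamma α * Real.Gamma (2-α)) := by
      apply mul_left_cancel₀ hn1
      rw [hsum, ih]; ring
    have e2 : n+1+1 = n+2 := rfl
    rw [e2, key]
    push_cast; ring

lemma nablaSum_psi (α : ℝ) (h1 : 1 < α) (h2 : α < 2) (a s t : ℤ) (has : a ≤ s) :
    nablaSum (2-α) a (fun r => rising ((r:ℝ) - s + 1) (α-1)) t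
      = if s ≤ t then Real.Gamma α * ((t:ℝ) - s + 1) else 0 := by
  have vanish : ∀ r : ℤ, r < s → rising ((r:ℝ) - s + 1) (α-1) = 0 := by
    intro r hr
    have e : (r:ℝ) - s + 1 = ((r - s + 1 : ℤ) : ℝ) := by push_cast; ring
    rw [e]; exact rising_int_nonpos (by omega) _
  unfold nablaSum
  beta_reduce
  by_cases hst : s ≤ t
  · rw [if_pos hst]
    set n : ℕ := (t - s).toNat with hn
    have hnz : (n:ℤ) = t - s := Int.toNat_of_nonneg (by omega)
    have trunc : ∑ r ∈ Finset.Icc a t,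
          (rising ((t:ℝ) - r + 1) (2-α-1) / Real.Gamma (2-α)) * rising ((r:ℝ) - s + 1) (α-1)
        = ∑ r ∈ Finset.Icc s t,
          (rising ((t:ℝ) - r + 1) (2-α-1) / Real.Gamma (2-α)) * rising ((r:ℝ) - s + 1) (α-1) := by
      apply (Finset.sum_subset (Finset.Icc_subset_Icc_left has) _).symm
      intro r hr hr2
      simp only [Finset.mem_Icc] at hr hr2
      rw [vanish r (by omega), mul_zero]
    rw [trunc]
    have emb : Finset.Icc s t = (Finset.range (n+1)).map
        ⟨fun j : ℕ => s + (j:ℤ), by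
          have hinj : Function.Injective (fun j : ℕ => s + (j:ℤ)) := by
            intro x y hxy; simpa using hxy
          exact hinj⟩ := by
      ext x
      simp only [Finset.mem_Icc, Finset.mem_map, Finset.mem_range, Function.Embedding.coeFn_mk]
      constructor
      · intro hx; exact ⟨(x - s).toNat, by omega, by omega⟩
      · rintro ⟨j, hj, rfl⟩; omega
    rw [emb, Finset.sum_map]
    simp only [Function.Embedding.coeFn_mk]
    have term : ∀ j ∈ Finset.range (n+1),
        (rising ((t:ℝ) - ((s + (j:ℤ) : ℤ):ℝ) + 1) (2-α-1) / Real.Gamma (2-α))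
          * rising (((s + (j:ℤ) : ℤ):ℝ) - s + 1) (α-1)
        = gg α j * ff α (n-j) / Real.Gamma (2-α) := by
      intro j hj
      have hjn : j ≤ n := by simpa [Nat.lt_succ_iff] using hj
      have c1 : (t:ℝ) - ((s + (j:ℤ) : ℤ):ℝ) + 1 = ((n-j : ℕ):ℝ) + 1 := by
        have : ((n-j:ℕ):ℝ) = (n:ℝ) - (j:ℝ) := by rw [Nat.cast_sub hjn]
        rw [this]
        have : ((n:ℕ):ℝ) = (t:ℝ) - (s:ℝ) := by exact_mod_cast congrArg (Int.cast : ℤ → ℝ) hnz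
        rw [this]; push_cast; ring
      have c2 : ((s + (j:ℤ) : ℤ):ℝ) - s + 1 = (j:ℝ) + 1 := by push_cast; ring
      rw [c1, c2]
      unfold rising gg ff
      rw [show ((n-j:ℕ):ℝ) + 1 + (2-α-1) = ((n-j:ℕ):ℝ) + (2-α) by ring,
        show (j:ℝ) + 1 + (α-1) = (j:ℝ) + α by ring]
      ring
    rw [Finset.sum_congr rfl term, ← Finset.sum_div,
      convC α (by linarith) h2 n]
    have : ((n:ℕ):ℝ) = (t:ℝ) - (s:ℝ) := by exact_mod_cast congrArg (Int.cast : ℤ → ℝ) hnz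
    rw [this]
    have hΓ : Real.Gamma (2-α) ≠ 0 := ne_of_gt (Real.Gamma_pos_of_pos (by linarith))
    field_simp
  · rw [if_neg hst]
    apply Finset.sum_eq_zero
    intro r hr
    simp only [Finset.mem_Icc] at hr
    rw [vanish r (by omega), mul_zero]

lemma rising_zero_arg (r : ℝ) : rising 0 r = 0 := by
  simp [rising, Real.Gamma_zero]

lemma rising_one (r : ℝ) (hr : r ≠ 0) : rising 1 r = Real.Gamma (1 + r) := by
  simp [rising, Real.Gamma_one]

lemma rising_pos {x r : ℝ} (hx : 0 < x) (hxr : 0 < x + r) : 0 < rising x r :=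
  div_pos (Real.Gamma_pos_of_pos hxr) (Real.Gamma_pos_of_pos hx)

lemma nablaDiff_psi (α : ℝ) (h1 : 1 < α) (h2 : α < 2) (a s t : ℤ) (has : a ≤ s) :
    nablaDiff α a (fun r => rising ((r:ℝ) - s + 1) (α-1)) t
      = if t = s then Real.Gamma α else 0 := by
  unfold nablaDiff
  rw [nablaSum_psi α h1 h2 a s t has, nablaSum_psi α h1 h2 a s (t-1) has,
    nablaSum_psi α h1 h2 a s (t-2) has]
  rcases lt_trichotomy t s with ht | ht | ht
  · rw [if_neg (show ¬ s ≤ t by omega), if_neg (show ¬ s ≤ t-1 by omega),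
      if_neg (show ¬ s ≤ t-2 by omega), if_neg (show ¬ t = s by omega)]
    ring
  · rw [if_pos (show s ≤ t by omega), if_neg (show ¬ s ≤ t-1 by omega),
      if_neg (show ¬ s ≤ t-2 by omega), if_pos ht, ht]
    push_cast; ring
  · rw [if_neg (show ¬ t = s by omega)]
    by_cases h21 : t = s + 1
    · rw [if_pos (show s ≤ t by omega), if_pos (show s ≤ t-1 by omega),
        if_neg (show ¬ s ≤ t-2 by omega)]
      subst h21; push_cast; ring
    · rw [if_pos (show s ≤ t by omega), if_pos (show s ≤ t-1 by omega),
        if_pos (show s ≤ t-2 by omega)]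
      push_cast; ring

lemma nablaSum_comb (ν : ℝ) (a : ℤ) (c d : ℝ) (F K : ℤ → ℝ) (t : ℤ) :
    nablaSum ν a (fun r => c * F r - d * K r) t
      = c * nablaSum ν a F t - d * nablaSum ν a K t := by
  unfold nablaSum
  rw [Finset.mul_sum, Finset.mul_sum, ← Finset.sum_sub_distrib]
  apply Finset.sum_congr rfl
  intro r _; ring

lemma nablaDiff_comb (α : ℝ) (a : ℤ) (c d : ℝ) (F K : ℤ → ℝ) (t : ℤ) :
    nablaDiff α a (fun r => c * F r - d * K r) t
      = c * nablaDiff α a F t - d * nablaDiff α a K t := by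
  unfold nablaDiff
  rw [nablaSum_comb, nablaSum_comb, nablaSum_comb]; ring

lemma nablaSum_finsum {β : Type*} (S : Finset β) (ν : ℝ) (a : ℤ) (F : β → ℤ → ℝ) (t : ℤ) :
    nablaSum ν a (fun r => ∑ s ∈ S, F s r) t = ∑ s ∈ S, nablaSum ν a (F s) t := by
  unfold nablaSum
  rw [Finset.sum_comm]
  apply Finset.sum_congr rfl
  intro r _
  rw [Finset.mul_sum]

lemma nablaDiff_finsum {β : Type*} (S : Finset β) (α : ℝ) (a : ℤ) (F : β → ℤ → ℝ) (t : ℤ) :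
    nablaDiff α a (fun r => ∑ s ∈ S, F s r) t = ∑ s ∈ S, nablaDiff α a (F s) t := by
  unfold nablaDiff
  rw [nablaSum_finsum, nablaSum_finsum, nablaSum_finsum, Finset.mul_sum,
    ← Finset.sum_sub_distrib, ← Finset.sum_add_distrib]

lemma nablaDiff_triangular (α : ℝ) (h1 : 1 < α) (h2 : α < 2) (a t : ℤ) (hat : a + 2 ≤ t)
    (w : ℤ → ℝ) (hw : ∀ r, a ≤ r → r < t → w r = 0) :
    nablaDiff α a w t = w t := by
  have z1 : nablaSum (2-α) a w (t-1) = 0 := by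
    apply Finset.sum_eq_zero
    intro r hr
    simp only [Finset.mem_Icc] at hr
    rw [hw r (by omega) (by omega), mul_zero]
  have z2 : nablaSum (2-α) a w (t-2) = 0 := by
    apply Finset.sum_eq_zero
    intro r hr
    simp only [Finset.mem_Icc] at hr
    rw [hw r (by omega) (by omega), mul_zero]
  have e : Finset.Icc a t = insert t (Finset.Icc a (t-1)) := by
    ext x; simp only [Finset.mem_Icc, Finset.mem_insert]; omega
  have z0 : nablaSum (2-α) a w t = w t := by
    unfold nablaSum
    rw [e, Finset.sum_insert (by simp only [Finset.mem_Icc]; omega)]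
    have : ∑ r ∈ Finset.Icc a (t-1),
        (rising ((t:ℝ) - r + 1) (2-α-1) / Real.Gamma (2-α)) * w r = 0 := by
      apply Finset.sum_eq_zero
      intro r hr
      simp only [Finset.mem_Icc] at hr
      rw [hw r (by omega) (by omega), mul_zero]
    rw [this, add_zero]
    have harg : (t:ℝ) - t + 1 = 1 := by ring
    rw [harg, rising_one _ (by linarith),
      show (1:ℝ) + (2-α-1) = 2-α by ring,
      div_self (ne_of_gt (Real.Gamma_pos_of_pos (by linarith))), one_mul]
  unfold nablaDiff
  rw [z0, z1, z2]; ring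

lemma G_eq (a b : ℤ) (α : ℝ) (t s : ℤ) :
    G a b α t s = (rising ((b:ℝ)-s+1) (α-1) / rising ((b:ℝ)-a) (α-1))
        * rising ((t:ℝ)-a) (α-1) / Real.Gamma α
      - rising ((t:ℝ)-s+1) (α-1) / Real.Gamma α := by
  unfold G
  split_ifs with hts
  · have : rising ((t:ℝ)-s+1) (α-1) = 0 := by
      rw [show (t:ℝ)-s+1 = ((t-s+1:ℤ):ℝ) by push_cast; ring]
      exact rising_int_nonpos (by omega) _
    rw [this]; ring
  · ring

theorem bvp_unique_solution (a b : ℤ) (hab : a + 2 ≤ b) (α : ℝ)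
    (hα1 : 1 < α) (hα2 : α < 2) (h : ℤ → ℝ) :
    (∀ t ∈ Finset.Icc (a + 2) b,
        nablaDiff α a (fun t' => ∑ s ∈ Finset.Icc (a + 1) b, G a b α t' s * h s) t + h t = 0) ∧
    (∑ s ∈ Finset.Icc (a + 1) b, G a b α a s * h s) = 0 ∧
    (∑ s ∈ Finset.Icc (a + 1) b, G a b α b s * h s) = 0 ∧
    (∀ u : ℤ → ℝ,
        (∀ t ∈ Finset.Icc (a + 2) b, nablaDiff α a u t + h t = 0) →
        u a = 0 → u b = 0 →
        ∀ t ∈ Finset.Icc a b, u t = ∑ s ∈ Finset.Icc (a + 1) b, G a b α t s * h s) := by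
  have h0α : (0:ℝ) < α := by linarith
  have hΓα : Real.Gamma α ≠ 0 := ne_of_gt (Real.Gamma_pos_of_pos h0α)
  have hba : (2:ℝ) ≤ (b:ℝ) - a := by
    have : ((a:ℝ)) + 2 ≤ (b:ℝ) := by exact_mod_cast hab
    linarith
  have hR : 0 < rising ((b:ℝ)-a) (α-1) := rising_pos (by linarith) (by linarith)
  have phi_diff : ∀ t : ℤ, nablaDiff α a (fun r : ℤ => rising ((r:ℝ)-a) (α-1)) t
      = if t = a+1 then Real.Gamma α else 0 := by
    intro t
    have hd := nablaDiff_psi α hα1 hα2 a (a+1) t (by omega)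
    have ef : (fun r : ℤ => rising ((r:ℝ) - ((a+1:ℤ):ℝ) + 1) (α-1))
        = (fun r : ℤ => rising ((r:ℝ)-a) (α-1)) := by
      funext r; congr 1; push_cast; ring
    rw [ef] at hd
    exact hd
  have main1 : ∀ t ∈ Finset.Icc (a + 2) b,
      nablaDiff α a (fun t' => ∑ s ∈ Finset.Icc (a + 1) b, G a b α t' s * h s) t + h t = 0 := by
    intro t ht
    rw [Finset.mem_Icc] at ht
    have efin := nablaSum_finsum (β := ℤ)
    have hfin := nablaDiff_finsum (Finset.Icc (a+1) b) α a (fun s t' => G a b α t' s * h s) t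
    rw [hfin]
    have terms : ∀ s ∈ Finset.Icc (a+1) b,
        nablaDiff α a (fun t' => G a b α t' s * h s) t
          = -(h s / Real.Gamma α) * (if t = s then Real.Gamma α else 0) := by
      intro s hs
      rw [Finset.mem_Icc] at hs
      have Gsplit : (fun t' : ℤ => G a b α t' s * h s)
          = (fun t' : ℤ => (rising ((b:ℝ)-s+1) (α-1) / rising ((b:ℝ)-a) (α-1) * h s
                / Real.Gamma α) * rising ((t':ℝ)-a) (α-1)
              - (h s / Real.Gamma α) * rising ((t':ℝ)-s+1) (α-1)) := by
        funext t'; rw [G_eq]; ring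
      rw [Gsplit, nablaDiff_comb, phi_diff, nablaDiff_psi α hα1 hα2 a s t (by omega),
        if_neg (show ¬ t = a+1 by omega)]
      ring
    rw [Finset.sum_congr rfl terms]
    have hsum : ∑ s ∈ Finset.Icc (a+1) b,
        -(h s / Real.Gamma α) * (if t = s then Real.Gamma α else 0) = - h t := by
      rw [Finset.sum_eq_single t]
      · rw [if_pos rfl]; field_simp
      · intro s _ hst; rw [if_neg (fun hh => hst hh.symm)]; ring
      · intro hnt; exact absurd (Finset.mem_Icc.mpr ⟨by omega, ht.2⟩) hnt
    rw [hsum]; ring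
  have bda : (∑ s ∈ Finset.Icc (a + 1) b, G a b α a s * h s) = 0 := by
    apply Finset.sum_eq_zero
    intro s hs
    rw [Finset.mem_Icc] at hs
    have e1 : rising ((a:ℝ)-a) (α-1) = 0 := by rw [sub_self]; exact rising_zero_arg _
    have e2 : rising ((a:ℝ)-s+1) (α-1) = 0 := by
      rw [show (a:ℝ)-s+1 = ((a-s+1:ℤ):ℝ) by push_cast; ring]
      exact rising_int_nonpos (by omega) _
    rw [G_eq, e1, e2]
    simp
  have bdb : (∑ s ∈ Finset.Icc (a + 1) b, G a b α b s * h s) = 0 := by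
    apply Finset.sum_eq_zero
    intro s hs
    rw [G_eq, div_mul_cancel₀ _ (ne_of_gt hR)]
    ring
  refine ⟨main1, bda, bdb, ?_⟩
  intro u hu hua hub t ht
  rw [Finset.mem_Icc] at ht
  set u₀ : ℤ → ℝ := fun t' => ∑ s ∈ Finset.Icc (a + 1) b, G a b α t' s * h s with hu₀def
  have hu₀a : u₀ a = 0 := bda
  have hu₀b : u₀ b = 0 := bdb
  show u t = u₀ t
  have hwdiff : ∀ r ∈ Finset.Icc (a+2) b, nablaDiff α a (fun x => u x - u₀ x) r = 0 := by
    intro r hr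
    have e2 : (fun x => u x - u₀ x) = (fun x : ℤ => (1:ℝ) * u x - (1:ℝ) * u₀ x) := by
      funext x; ring
    rw [e2, nablaDiff_comb]
    have h1' := hu r hr
    have h2' := main1 r hr
    linarith
  set c : ℝ := (u (a+1) - u₀ (a+1)) / Real.Gamma α with hcdef
  set z : ℤ → ℝ := fun x => u x - u₀ x - c * rising ((x:ℝ)-a) (α-1) with hzdef
  have hzdiff : ∀ r ∈ Finset.Icc (a+2) b, nablaDiff α a z r = 0 := by
    intro r hr
    have hrb := Finset.mem_Icc.mp hr
    have e : z = (fun x : ℤ => (1:ℝ) * (u x - u₀ x) - c * rising ((x:ℝ)-a) (α-1)) := by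
      funext x; rw [hzdef]; ring
    rw [e, nablaDiff_comb, phi_diff, if_neg (show ¬ r = a+1 by omega), hwdiff r hr]
    ring
  have hza : z a = 0 := by
    have e1 : rising ((a:ℝ)-a) (α-1) = 0 := by rw [sub_self]; exact rising_zero_arg _
    rw [hzdef]
    simp only [hua, hu₀a, e1]
    ring
  have hza1 : z (a+1) = 0 := by
    have e1 : rising (((a+1:ℤ):ℝ)-a) (α-1) = Real.Gamma α := by
      rw [show ((a+1:ℤ):ℝ)-a = 1 by push_cast; ring,
        rising_one _ (show α - 1 ≠ 0 by intro hh; linarith),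
        show (1:ℝ)+(α-1) = α by ring]
    rw [hzdef]
    simp only [e1, hcdef]
    field_simp
    ring
  have key : ∀ n : ℕ, a + (n:ℤ) ≤ b → z (a + (n:ℤ)) = 0 := by
    intro n
    induction n using Nat.strong_induction_on with
    | _ n ih =>
      intro hnb
      rcases n with _ | (_ | m)
      · simpa using hza
      · simpa using hza1
      · have hm2 : a + 2 ≤ a + ((m+2:ℕ):ℤ) := by push_cast; omega
        have h0 := hzdiff (a + ((m+2:ℕ):ℤ))
          (Finset.mem_Icc.mpr ⟨hm2, by push_cast at hnb ⊢; omega⟩)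
        rw [nablaDiff_triangular α hα1 hα2 a _ hm2 z ?_] at h0
        · exact h0
        · intro r har hrt
          have hr2 : r = a + (((r-a).toNat:ℕ):ℤ) := by omega
          rw [hr2]
          refine ih (r-a).toNat ?_ ?_
          · push_cast at hrt; omega
          · push_cast at hnb ⊢; omega
  have hzall : ∀ r : ℤ, a ≤ r → r ≤ b → z r = 0 := by
    intro r h1r h2r
    have hk := key (r-a).toNat (by omega)
    rwa [show a + (((r-a).toNat:ℕ):ℤ) = r by omega] at hk
  have hc0 : c = 0 := by
    have hzb := hzall b (by omega) le_rfl
    rw [hzdef] at hzb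
    simp only [hub, hu₀b] at hzb
    have : c * rising ((b:ℝ)-a) (α-1) = 0 := by linarith
    rcases mul_eq_zero.mp this with hc | hr0
    · exact hc
    · exact absurd hr0 (ne_of_gt hR)
  have hzt := hzall t ht.1 ht.2
  rw [hzdef, hc0] at hzt
  simp at hzt
  linarith
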